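/- Let (X,T) be a topological dynamical system, μ ∈ M(X,T), and A = {a_i} a strictly increasing sequence with positive upper density. If (X,T) is μ-A-mean-equicontinuous, then (X,B,μ,T) is rigid. -/

import Mathlib

open MeasureTheory Filter Topology
open scoped ENNReal NNReal


lemma lem_limsup_add (u v : ℕ → ℝ≥0∞) :
    limsup (fun n => u n + v n) atTop ≤ limsup u atTop + limsup v atTop := by
  by_cases hu : limsup u atTop = ⊤
  · simp [hu]
  by_cases hv : limsup v atTop = ⊤
  · simp [hv]
  refine ENNReal.le_of_forall_pos_le_add fun ε hε _ => ?_
  have hε2 : ((ε : ℝ≥0∞) / 2) ≠ 0 := by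
    simp [ENNReal.div_eq_zero_iff, hε.ne']
  have h1 : ∀ᶠ n in atTop, u n < limsup u atTop + (ε : ℝ≥0∞) / 2 :=
    Filter.eventually_lt_of_limsup_lt (ENNReal.lt_add_right hu hε2)
  have h2 : ∀ᶠ n in atTop, v n < limsup v atTop + (ε : ℝ≥0∞) / 2 :=
    Filter.eventually_lt_of_limsup_lt (ENNReal.lt_add_right hv hε2)
  refine Filter.limsup_le_of_le (by isBoundedDefault) ?_
  filter_upwards [h1, h2] with n h1 h2
  calc u n + v n ≤ (limsup u atTop + (ε : ℝ≥0∞) / 2) + (limsup v atTop + (ε : ℝ≥0∞) / 2) :=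
        add_le_add h1.le h2.le
    _ = limsup u atTop + limsup v atTop + ((ε : ℝ≥0∞) / 2 + (ε : ℝ≥0∞) / 2) := by ring
    _ = limsup u atTop + limsup v atTop + (ε : ℝ≥0∞) := by rw [ENNReal.add_halves]

lemma lem_limsup_sum {ι : Type*} (s : Finset ι) (F : ι → ℕ → ℝ≥0∞) :
    limsup (fun n => ∑ l ∈ s, F l n) atTop ≤ ∑ l ∈ s, limsup (F l) atTop := by
  classical
  induction s using Finset.induction_on with
  | empty => simp
  | insert x s' hx ih =>
    simp only [Finset.sum_insert hx]
    calc limsup (fun n => F x n + ∑ l ∈ s', F l n) atTop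
        ≤ limsup (F x) atTop + limsup (fun n => ∑ l ∈ s', F l n) atTop := lem_limsup_add _ _
      _ ≤ _ := add_le_add le_rfl ih

open Classical in
lemma lem_return {X : Type*} [MetricSpace X] [CompactSpace X] [MeasurableSpace X]
    [BorelSpace X] (μ : Measure X) [IsProbabilityMeasure μ] (T : X ≃ₜ X)
    (hT : MeasurePreserving T μ μ)
    (a : ℕ → ℕ) (ha : StrictMono a)
    (hmec : ∀ τ > (0 : ℝ), ∃ K : Set X, IsCompact K ∧
      μ K > ENNReal.ofReal (1 - τ) ∧ ∀ ε > (0 : ℝ), ∃ δ > (0 : ℝ),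
      ∀ x ∈ K, ∀ y ∈ K, dist x y < δ →
        limsup (fun n : ℕ => (1 / (n : ℝ)) *
          ∑ i ∈ Finset.range n, dist ((⇑T)^[a i] x) ((⇑T)^[a i] y)) atTop < ε) :
    ∀ ε > (0 : ℝ), ∀ M : ℕ, ∃ t : ℕ, M ≤ t ∧
      ∫⁻ x, ENNReal.ofReal (dist ((⇑T)^[t] x) x) ∂μ ≤ ENNReal.ofReal ε := by
  intro ε hε M
  -- a uniform bound on distances
  obtain ⟨C₀, hC₀⟩ := Metric.isBounded_iff.1 (isCompact_univ : IsCompact (Set.univ : Set X)).isBounded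
  set C : ℝ := max C₀ 1 with hCdef
  have hC1 : (1:ℝ) ≤ C := le_max_right _ _
  have hC0 : (0:ℝ) < C := lt_of_lt_of_le one_pos hC1
  have hC : ∀ x y : X, dist x y ≤ C :=
    fun x y => le_trans (hC₀ (Set.mem_univ x) (Set.mem_univ y)) (le_max_left _ _)
  -- parameters
  set τ : ℝ := min 1 (ε / (4 * C)) with hτdef
  have hτ0 : 0 < τ := lt_min one_pos (by positivity)
  have hτ1 : τ ≤ 1 := min_le_left _ _
  have hτε : C * τ ≤ ε / 4 := by
    have : τ ≤ ε / (4 * C) := min_le_right _ _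
    calc C * τ ≤ C * (ε / (4 * C)) := by nlinarith
      _ = ε / 4 := by field_simp
  obtain ⟨K, hKc, hKμ, hKP⟩ := hmec τ hτ0
  have hKm : MeasurableSet K := hKc.isClosed.measurableSet
  set ε'' : ℝ := ε / 32 with hε''def
  have hε''0 : 0 < ε'' := by positivity
  obtain ⟨δ, hδ0, hδP⟩ := hKP ε'' hε''0
  -- finite cover of K by δ/2-balls centered in K
  have hcov : K ⊆ ⋃ y : K, Metric.ball (y : X) (δ / 2) := fun x hx =>
    Set.mem_iUnion.2 ⟨⟨x, hx⟩, Metric.mem_ball_self (by positivity)⟩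
  obtain ⟨s, hs⟩ := hKc.elim_finite_subcover (fun y : K => Metric.ball (y : X) (δ / 2))
    (fun y => Metric.isOpen_ball) hcov
  set m : ℕ := s.card with hmdef
  set y : Fin m → X := fun l => ((s.equivFin.symm l : K) : X) with hydef
  have hyK : ∀ l, y l ∈ K := fun l => (s.equivFin.symm l : K).2
  have hcov' : K ⊆ ⋃ l : Fin m, Metric.ball (y l) (δ / 2) := by
    intro x hx
    obtain ⟨yy, hyy, hxB⟩ := Set.mem_iUnion₂.1 (hs hx)
    exact Set.mem_iUnion.2 ⟨s.equivFin ⟨yy, hyy⟩, by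
      simpa [hydef, Equiv.symm_apply_apply] using hxB⟩
  -- the pieces
  set P : Fin m → Set X := fun l =>
    (K ∩ Metric.ball (y l) (δ / 2)) \ ⋃ (l' : Fin m) (_ : l' < l), Metric.ball (y l') (δ / 2)
    with hPdef
  have hPm : ∀ l, MeasurableSet (P l) := fun l =>
    ((hKm.inter Metric.isOpen_ball.measurableSet).diff
      (MeasurableSet.iUnion fun l' => MeasurableSet.iUnion fun _ =>
        Metric.isOpen_ball.measurableSet))
  have hPdisj : Pairwise (Function.onFun Disjoint P) := by
    intro l₁ l₂ hne
    rcases hne.lt_or_gt with h | h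
    · exact Set.disjoint_left.2 fun x hx₁ hx₂ =>
        hx₂.2 (Set.mem_iUnion.2 ⟨l₁, Set.mem_iUnion.2 ⟨h, hx₁.1.2⟩⟩)
    · exact Set.disjoint_left.2 fun x hx₁ hx₂ =>
        hx₁.2 (Set.mem_iUnion.2 ⟨l₂, Set.mem_iUnion.2 ⟨h, hx₂.1.2⟩⟩)
  have hPunion : (⋃ l, P l) = K := by
    apply Set.Subset.antisymm
    · exact Set.iUnion_subset fun l x hx => hx.1.1
    · intro x hx
      have hex : ∃ l : Fin m, x ∈ Metric.ball (y l) (δ / 2) := Set.mem_iUnion.1 (hcov' hx)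
      classical
      obtain ⟨l₀, hl₀, hmin⟩ := Finset.exists_min_image
        (Finset.univ.filter fun l => x ∈ Metric.ball (y l) (δ / 2)) id
        (by obtain ⟨l, hl⟩ := hex; exact ⟨l, Finset.mem_filter.2 ⟨Finset.mem_univ _, hl⟩⟩)
      refine Set.mem_iUnion.2 ⟨l₀, ⟨⟨hx, (Finset.mem_filter.1 hl₀).2⟩, ?_⟩⟩
      intro hmem
      obtain ⟨l', hl'⟩ := Set.mem_iUnion.1 hmem
      obtain ⟨hlt, hball⟩ := Set.mem_iUnion.1 hl'
      exact absurd (hmin l' (Finset.mem_filter.2 ⟨Finset.mem_univ _, hball⟩)) (not_le.2 hlt)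
  -- continuity and measurability helpers
  have hTcont : ∀ n : ℕ, Continuous ((⇑T)^[n]) := fun n => T.continuous.iterate n
  have hdcont : ∀ (i : ℕ) (z : X), Continuous fun x => dist ((⇑T)^[a i] x) ((⇑T)^[a i] z) :=
    fun i z => (hTcont (a i)).dist continuous_const
  have hdm : ∀ (i : ℕ) (z : X),
      Measurable fun x => ENNReal.ofReal (dist ((⇑T)^[a i] x) ((⇑T)^[a i] z)) :=
    fun i z => ENNReal.measurable_ofReal.comp (hdcont i z).measurable
  -- the averaged quantities
  set c : ℕ → ℝ≥0∞ := fun i => ∑ l : Fin m,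
    ∫⁻ x in P l, ENNReal.ofReal (dist ((⇑T)^[a i] x) ((⇑T)^[a i] (y l))) ∂μ with hcdef
  set u : Fin m → X → ℕ → ℝ := fun l x n =>
    (1 / (n : ℝ)) * ∑ i ∈ Finset.range n, dist ((⇑T)^[a i] x) ((⇑T)^[a i] (y l)) with hudef
  have hu_bound : ∀ l x n, u l x n ≤ C := by
    intro l x n
    rcases Nat.eq_zero_or_pos n with rfl | hn
    · simp [hudef, hC0.le]
    · have hsum : ∑ i ∈ Finset.range n, dist ((⇑T)^[a i] x) ((⇑T)^[a i] (y l)) ≤ n * C := by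
        calc ∑ i ∈ Finset.range n, dist ((⇑T)^[a i] x) ((⇑T)^[a i] (y l))
            ≤ ∑ _i ∈ Finset.range n, C := Finset.sum_le_sum fun i _ => hC _ _
          _ = n * C := by simp [mul_comm]
      have hn' : (0:ℝ) < n := by exact_mod_cast hn
      calc u l x n ≤ (1/(n:ℝ)) * (n * C) := by
            apply mul_le_mul_of_nonneg_left hsum (by positivity)
        _ = C := by field_simp
  have hu_nonneg : ∀ l x n, 0 ≤ u l x n := by
    intro l x n
    rcases Nat.eq_zero_or_pos n with rfl | hn
    · simp [hudef]
    · have hn' : (0:ℝ) < n := by exact_mod_cast hn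
      apply mul_nonneg (by positivity)
      exact Finset.sum_nonneg fun i _ => dist_nonneg
  have hGmeas : ∀ (l : Fin m) (n : ℕ), Measurable fun x => ENNReal.ofReal (u l x n) := by
    intro l n
    apply ENNReal.measurable_ofReal.comp
    apply Continuous.measurable
    exact continuous_const.mul (continuous_finset_sum _ fun i _ => hdcont i (y l))
  -- Claim 1 : the Cesàro averages of `c` are eventually small
  have claim1 : limsup (fun n : ℕ => ((n : ℝ≥0∞))⁻¹ * ∑ i ∈ Finset.range n, c i) atTop
      ≤ ENNReal.ofReal ε'' := by
    have hid : ∀ n : ℕ, 1 ≤ n → ((n : ℝ≥0∞))⁻¹ * ∑ i ∈ Finset.range n, c i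
        = ∑ l : Fin m, ∫⁻ x in P l, ENNReal.ofReal (u l x n) ∂μ := by
      intro n hn
      have hn' : (0:ℝ) < n := by exact_mod_cast hn
      have hptw : ∀ (l : Fin m) (x : X), ENNReal.ofReal (u l x n)
          = ((n : ℝ≥0∞))⁻¹ * ∑ i ∈ Finset.range n,
            ENNReal.ofReal (dist ((⇑T)^[a i] x) ((⇑T)^[a i] (y l))) := by
        intro l x
        rw [hudef]
        simp only
        rw [ENNReal.ofReal_mul (by positivity),
          ENNReal.ofReal_sum_of_nonneg (fun i _ => dist_nonneg), one_div,
          ENNReal.ofReal_inv_of_pos hn', ENNReal.ofReal_natCast]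
      calc ((n : ℝ≥0∞))⁻¹ * ∑ i ∈ Finset.range n, c i
          = ((n : ℝ≥0∞))⁻¹ * ∑ l : Fin m, ∑ i ∈ Finset.range n,
            ∫⁻ x in P l, ENNReal.ofReal (dist ((⇑T)^[a i] x) ((⇑T)^[a i] (y l))) ∂μ := by
            rw [hcdef]; rw [Finset.sum_comm]
        _ = ∑ l : Fin m, ((n : ℝ≥0∞))⁻¹ * ∑ i ∈ Finset.range n,
            ∫⁻ x in P l, ENNReal.ofReal (dist ((⇑T)^[a i] x) ((⇑T)^[a i] (y l))) ∂μ := by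
            rw [Finset.mul_sum]
        _ = ∑ l : Fin m, ∫⁻ x in P l, ENNReal.ofReal (u l x n) ∂μ := by
            refine Finset.sum_congr rfl fun l _ => ?_
            rw [← lintegral_finset_sum _ (fun i _ => hdm i (y l)),
              ← lintegral_const_mul _ (Finset.measurable_sum _ fun i _ => hdm i (y l))]
            exact lintegral_congr fun x => (hptw l x).symm
    calc limsup (fun n : ℕ => ((n : ℝ≥0∞))⁻¹ * ∑ i ∈ Finset.range n, c i) atTop
        ≤ limsup (fun n : ℕ => ∑ l : Fin m, ∫⁻ x in P l, ENNReal.ofReal (u l x n) ∂μ) atTop := by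
          exact Filter.limsup_le_limsup (by
            filter_upwards [Filter.eventually_ge_atTop 1] with n hn
            exact le_of_eq (hid n hn))
      _ ≤ ∑ l : Fin m, limsup (fun n : ℕ => ∫⁻ x in P l, ENNReal.ofReal (u l x n) ∂μ) atTop :=
          lem_limsup_sum _ _
      _ ≤ ∑ l : Fin m, ∫⁻ x in P l, limsup (fun n : ℕ => ENNReal.ofReal (u l x n)) atTop ∂μ := by
          refine Finset.sum_le_sum fun l _ => ?_
          refine limsup_lintegral_le (μ := μ.restrict (P l)) (fun _ => ENNReal.ofReal C)
            (fun n => hGmeas l n) (fun n => Filter.Eventually.of_forall fun x =>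
              ENNReal.ofReal_le_ofReal (hu_bound l x n)) ?_
          rw [lintegral_const]
          exact ENNReal.mul_ne_top ENNReal.ofReal_ne_top
            (by simp [Measure.restrict_apply_univ])
      _ ≤ ∑ l : Fin m, ∫⁻ _x in P l, ENNReal.ofReal ε'' ∂μ := by
          refine Finset.sum_le_sum fun l _ => ?_
          refine lintegral_mono_ae (ae_restrict_of_forall_mem (hPm l) fun x hx => ?_)
          have hxK : x ∈ K := hx.1.1
          have hxy : dist x (y l) < δ := lt_of_lt_of_le hx.1.2 (half_le_self hδ0.le)
          have hreal : limsup (fun n : ℕ => u l x n) atTop < ε'' := by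
            have := hδP x hxK (y l) (hyK l) hxy
            simpa [hudef] using this
          have hbdd : IsBoundedUnder (· ≤ ·) atTop (fun n : ℕ => u l x n) :=
            isBoundedUnder_of ⟨C, fun n => hu_bound l x n⟩
          have hev : ∀ᶠ n in atTop, u l x n < ε'' :=
            Filter.eventually_lt_of_limsup_lt hreal hbdd
          exact Filter.limsup_le_of_le (by isBoundedDefault)
            (hev.mono fun n h => ENNReal.ofReal_le_ofReal h.le)
      _ = ENNReal.ofReal ε'' * μ K := by
          simp only [setLIntegral_const]
          rw [← Finset.mul_sum]
          congr 1
          have := measure_iUnion (μ := μ) hPdisj hPm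
          rw [hPunion] at this
          rw [this, tsum_fintype]
      _ ≤ ENNReal.ofReal ε'' * 1 := mul_le_mul_right prob_le_one _
      _ = ENNReal.ofReal ε'' := mul_one _
  -- Claim 2 : frequently, c i is small
  have claim2 : ∃ᶠ i in atTop, c i ≤ ENNReal.ofReal (4 * ε'') := by
    by_contra hcon
    rw [Filter.not_frequently] at hcon
    obtain ⟨N, hN⟩ := Filter.eventually_atTop.1 hcon
    have hev2 : ∀ᶠ (n : ℕ) in atTop, ((n : ℝ≥0∞))⁻¹ * ∑ i ∈ Finset.range n, c i
        < ENNReal.ofReal (2 * ε'') :=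
      Filter.eventually_lt_of_limsup_lt (lt_of_le_of_lt claim1
        ((ENNReal.ofReal_lt_ofReal_iff (by positivity : (0:ℝ) < 2 * ε'')).2 (by linarith)))
    obtain ⟨n₀, hn₀⟩ := Filter.eventually_atTop.1 hev2
    obtain ⟨q, hqn₀, hqN⟩ : ∃ q : ℕ, n₀ ≤ q ∧ N + 1 ≤ q :=
      ⟨max n₀ (N+1), le_max_left _ _, le_max_right _ _⟩
    obtain ⟨n, hndef⟩ : ∃ n : ℕ, n = 2 * q := ⟨_, rfl⟩
    have hq1 : 1 ≤ q := by omega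
    have hnn₀ : n₀ ≤ n := by omega
    have hq0 : ((q:ℝ≥0∞)) ≠ 0 := by
      simp only [ne_eq, Nat.cast_eq_zero]; omega
    have key : ENNReal.ofReal (2 * ε'') ≤ ((n : ℝ≥0∞))⁻¹ * ∑ i ∈ Finset.range n, c i := by
      have hsum1 : (((n - N : ℕ)) : ℝ≥0∞) * ENNReal.ofReal (4 * ε'')
          ≤ ∑ i ∈ Finset.range n, c i := by
        calc (((n - N : ℕ)) : ℝ≥0∞) * ENNReal.ofReal (4 * ε'')
            = (Finset.Ico N n).card • ENNReal.ofReal (4 * ε'') := by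
              rw [Nat.card_Ico, nsmul_eq_mul]
          _ ≤ ∑ i ∈ Finset.Ico N n, c i := Finset.card_nsmul_le_sum _ _ _
              (fun i hi => (not_le.1 (hN i (Finset.mem_Ico.1 hi).1)).le)
          _ ≤ ∑ i ∈ Finset.range n, c i := Finset.sum_le_sum_of_subset
              (by rw [Finset.range_eq_Ico]; exact Finset.Ico_subset_Ico (by omega) le_rfl)
      have hsum2 : ((q:ℝ≥0∞)) * ENNReal.ofReal (4 * ε'')
          ≤ (((n - N : ℕ)) : ℝ≥0∞) * ENNReal.ofReal (4 * ε'') := by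
        exact mul_le_mul_left (Nat.cast_le.2 (show q ≤ n - N by omega)) _
      calc ENNReal.ofReal (2 * ε'')
          = ((n : ℝ≥0∞))⁻¹ * (((q:ℝ≥0∞)) * ENNReal.ofReal (4 * ε'')) := by
            have hn' : ((n:ℝ≥0∞)) = 2 * (q:ℝ≥0∞) := by
              rw [hndef]; push_cast; ring
            rw [hn', ENNReal.mul_inv (Or.inl (by norm_num)) (Or.inl (by norm_num)),
              mul_assoc, ← mul_assoc ((q:ℝ≥0∞))⁻¹, ENNReal.inv_mul_cancel hq0
                (ENNReal.natCast_ne_top q), one_mul]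
            have h4 : ENNReal.ofReal (4 * ε'') = 2 * ENNReal.ofReal (2 * ε'') := by
              rw [← ENNReal.ofReal_ofNat, ← ENNReal.ofReal_mul (by norm_num)]
              norm_num; ring_nf
            rw [h4, ← mul_assoc, ENNReal.inv_mul_cancel (by norm_num) (by norm_num), one_mul]
        _ ≤ ((n : ℝ≥0∞))⁻¹ * ((((n - N : ℕ)) : ℝ≥0∞) * ENNReal.ofReal (4 * ε'')) :=
            mul_le_mul_right hsum2 _
        _ ≤ ((n : ℝ≥0∞))⁻¹ * ∑ i ∈ Finset.range n, c i := mul_le_mul_right hsum1 _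
    exact absurd (hn₀ n hnn₀) (not_lt.2 key)
  -- extract an infinite set of good indices
  obtain ⟨φ, hφmono, hφ⟩ := Filter.extraction_of_frequently_atTop claim2
  -- sequential compactness of (Fin m → X)
  set v : ℕ → (Fin m → X) := fun k l => (⇑T)^[a (φ k)] (y l) with hvdef
  obtain ⟨w, -, ψ, hψmono, hψtend⟩ :=
    (isCompact_univ : IsCompact (Set.univ : Set (Fin m → X))).tendsto_subseq
      (fun k => Set.mem_univ (v k))
  set η : ℝ := ε / 8 with hηdef
  have hη0 : 0 < η := by positivity
  obtain ⟨k₀, hk₀⟩ := (Metric.tendsto_atTop.1 hψtend) (η / 2) (by positivity)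
  set i₁ : ℕ := φ (ψ k₀) with hi₁def
  set k₂ : ℕ := max (k₀ + 1) (a i₁ + M) with hk₂def
  set i₂ : ℕ := φ (ψ k₂) with hi₂def
  have hk₀k₂ : k₀ < k₂ := lt_of_lt_of_le (Nat.lt_succ_self _) (le_max_left _ _)
  have hik : i₁ < i₂ := hφmono (hψmono hk₀k₂)
  have hai : a i₁ + M ≤ a i₂ := by
    have h1 : k₂ ≤ ψ k₂ := hψmono.le_apply
    have h2 : ψ k₂ ≤ φ (ψ k₂) := hφmono.le_apply
    have h3 : i₂ ≤ a i₂ := ha.le_apply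
    have h4 : a i₁ + M ≤ k₂ := le_max_right _ _
    omega
  set t : ℕ := a i₂ - a i₁ with htdef
  have htsum : t + a i₁ = a i₂ := by omega
  have htM : M ≤ t := by omega
  refine ⟨t, htM, ?_⟩
  -- coordinates of the two good times are close
  have hcoord : ∀ l, dist ((⇑T)^[a i₂] (y l)) ((⇑T)^[a i₁] (y l)) ≤ η := by
    intro l
    have h1 : dist (v (ψ k₂)) w < η / 2 := hk₀ k₂ hk₀k₂.le
    have h2 : dist (v (ψ k₀)) w < η / 2 := hk₀ k₀ le_rfl
    have h3 : dist (v (ψ k₂) l) (v (ψ k₀) l) ≤ dist (v (ψ k₂)) (v (ψ k₀)) :=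
      dist_le_pi_dist _ _ _
    have h4 : dist (v (ψ k₂)) (v (ψ k₀)) ≤ dist (v (ψ k₂)) w + dist (v (ψ k₀)) w :=
      dist_triangle_right _ _ _
    have : dist (v (ψ k₂) l) (v (ψ k₀) l) ≤ η := by linarith
    simpa [hvdef, hi₁def, hi₂def] using this
  -- transfer to a return-time estimate via measure preservation
  have hMP : MeasurePreserving ((⇑T)^[a i₁]) μ μ := hT.iterate (a i₁)
  have hgm : Measurable fun x => ENNReal.ofReal (dist ((⇑T)^[t] x) x) :=
    ENNReal.measurable_ofReal.comp ((hTcont t).dist continuous_id).measurable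
  have htrans : ∫⁻ x, ENNReal.ofReal (dist ((⇑T)^[t] x) x) ∂μ
      = ∫⁻ x, ENNReal.ofReal (dist ((⇑T)^[a i₂] x) ((⇑T)^[a i₁] x)) ∂μ := by
    rw [← hMP.lintegral_comp hgm]
    refine lintegral_congr fun x => ?_
    rw [← Function.iterate_add_apply, htsum]
  rw [htrans]
  set F : X → ℝ≥0∞ := fun x => ENNReal.ofReal (dist ((⇑T)^[a i₂] x) ((⇑T)^[a i₁] x))
    with hFdef
  have hFm : Measurable F :=
    ENNReal.measurable_ofReal.comp ((hTcont (a i₂)).dist (hTcont (a i₁))).measurable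
  have hKcompl : μ Kᶜ ≤ ENNReal.ofReal τ := by
    rw [prob_compl_eq_one_sub hKm]
    calc (1:ℝ≥0∞) - μ K ≤ 1 - ENNReal.ofReal (1 - τ) := tsub_le_tsub_left hKμ.le 1
      _ ≤ ENNReal.ofReal τ := by
        rw [← ENNReal.ofReal_one, ← ENNReal.ofReal_sub 1 (by linarith : (0:ℝ) ≤ 1 - τ)]
        exact ENNReal.ofReal_le_ofReal (by linarith)
  have hout : ∫⁻ x in Kᶜ, F x ∂μ ≤ ENNReal.ofReal (ε / 4) := by
    calc ∫⁻ x in Kᶜ, F x ∂μ ≤ ∫⁻ _x in Kᶜ, ENNReal.ofReal C ∂μ :=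
          lintegral_mono fun x => ENNReal.ofReal_le_ofReal (hC _ _)
      _ = ENNReal.ofReal C * μ Kᶜ := setLIntegral_const _ _
      _ ≤ ENNReal.ofReal C * ENNReal.ofReal τ := mul_le_mul_right hKcompl _
      _ = ENNReal.ofReal (C * τ) := (ENNReal.ofReal_mul hC0.le).symm
      _ ≤ ENNReal.ofReal (ε / 4) := ENNReal.ofReal_le_ofReal hτε
  have hin : ∫⁻ x in K, F x ∂μ
      ≤ c i₂ + (ENNReal.ofReal η + c i₁) := by
    have hKsum : ∫⁻ x in K, F x ∂μ = ∑ l : Fin m, ∫⁻ x in P l, F x ∂μ := by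
      rw [← hPunion, lintegral_iUnion hPm hPdisj, tsum_fintype]
    rw [hKsum]
    have hl : ∀ l : Fin m, ∫⁻ x in P l, F x ∂μ
        ≤ (∫⁻ x in P l, ENNReal.ofReal (dist ((⇑T)^[a i₂] x) ((⇑T)^[a i₂] (y l))) ∂μ)
          + (ENNReal.ofReal η * μ (P l)
            + ∫⁻ x in P l, ENNReal.ofReal (dist ((⇑T)^[a i₁] x) ((⇑T)^[a i₁] (y l))) ∂μ) := by
      intro l
      have hptw : ∀ x : X, F x
          ≤ ENNReal.ofReal (dist ((⇑T)^[a i₂] x) ((⇑T)^[a i₂] (y l)))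
            + (ENNReal.ofReal η
              + ENNReal.ofReal (dist ((⇑T)^[a i₁] x) ((⇑T)^[a i₁] (y l)))) := by
        intro x
        have htri : dist ((⇑T)^[a i₂] x) ((⇑T)^[a i₁] x)
            ≤ dist ((⇑T)^[a i₂] x) ((⇑T)^[a i₂] (y l))
              + (η + dist ((⇑T)^[a i₁] x) ((⇑T)^[a i₁] (y l))) := by
          have t1 : dist ((⇑T)^[a i₂] x) ((⇑T)^[a i₁] x)
              ≤ dist ((⇑T)^[a i₂] x) ((⇑T)^[a i₂] (y l))
                + dist ((⇑T)^[a i₂] (y l)) ((⇑T)^[a i₁] (y l))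
                + dist ((⇑T)^[a i₁] (y l)) ((⇑T)^[a i₁] x) :=
            dist_triangle4 _ _ _ _
          have t2 := hcoord l
          have t3 : dist ((⇑T)^[a i₁] (y l)) ((⇑T)^[a i₁] x)
              = dist ((⇑T)^[a i₁] x) ((⇑T)^[a i₁] (y l)) := dist_comm _ _
          linarith
        calc F x ≤ ENNReal.ofReal (dist ((⇑T)^[a i₂] x) ((⇑T)^[a i₂] (y l))
              + (η + dist ((⇑T)^[a i₁] x) ((⇑T)^[a i₁] (y l)))) :=
            ENNReal.ofReal_le_ofReal htri
          _ = _ := by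
            rw [ENNReal.ofReal_add dist_nonneg (by positivity),
              ENNReal.ofReal_add hη0.le dist_nonneg]
      calc ∫⁻ x in P l, F x ∂μ
          ≤ ∫⁻ x in P l, (ENNReal.ofReal (dist ((⇑T)^[a i₂] x) ((⇑T)^[a i₂] (y l)))
            + (ENNReal.ofReal η
              + ENNReal.ofReal (dist ((⇑T)^[a i₁] x) ((⇑T)^[a i₁] (y l))))) ∂μ :=
            lintegral_mono fun x => hptw x
        _ = _ := by
            rw [lintegral_add_left (hdm i₂ (y l)),
              lintegral_add_left measurable_const, setLIntegral_const]
    calc ∑ l : Fin m, ∫⁻ x in P l, F x ∂μ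
        ≤ ∑ l : Fin m, ((∫⁻ x in P l,
              ENNReal.ofReal (dist ((⇑T)^[a i₂] x) ((⇑T)^[a i₂] (y l))) ∂μ)
            + (ENNReal.ofReal η * μ (P l)
              + ∫⁻ x in P l,
                ENNReal.ofReal (dist ((⇑T)^[a i₁] x) ((⇑T)^[a i₁] (y l))) ∂μ)) :=
          Finset.sum_le_sum fun l _ => hl l
      _ = c i₂ + (ENNReal.ofReal η * μ K + c i₁) := by
          rw [Finset.sum_add_distrib, Finset.sum_add_distrib, ← Finset.mul_sum]
          congr 2
          · congr 1
            have := measure_iUnion (μ := μ) hPdisj hPm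
            rw [hPunion] at this
            rw [this, tsum_fintype]
      _ ≤ c i₂ + (ENNReal.ofReal η * 1 + c i₁) := by
          exact add_le_add le_rfl (add_le_add (mul_le_mul_right prob_le_one _) le_rfl)
      _ = c i₂ + (ENNReal.ofReal η + c i₁) := by rw [mul_one]
  have hc₁ : c i₁ ≤ ENNReal.ofReal (4 * ε'') := hφ (ψ k₀)
  have hc₂ : c i₂ ≤ ENNReal.ofReal (4 * ε'') := hφ (ψ k₂)
  calc ∫⁻ x, F x ∂μ = ∫⁻ x in K, F x ∂μ + ∫⁻ x in Kᶜ, F x ∂μ :=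
        (lintegral_add_compl F hKm).symm
    _ ≤ (c i₂ + (ENNReal.ofReal η + c i₁)) + ENNReal.ofReal (ε / 4) :=
        add_le_add hin hout
    _ ≤ (ENNReal.ofReal (4 * ε'') + (ENNReal.ofReal η + ENNReal.ofReal (4 * ε'')))
        + ENNReal.ofReal (ε / 4) :=
        add_le_add (add_le_add hc₂ (add_le_add le_rfl hc₁)) le_rfl
    _ ≤ ENNReal.ofReal ε := by
        rw [← ENNReal.ofReal_add (by positivity) (by positivity),
          ← ENNReal.ofReal_add (by positivity) (by positivity),
          ← ENNReal.ofReal_add (by positivity) (by positivity)]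
        refine ENNReal.ofReal_le_ofReal ?_
        rw [hε''def, hηdef]
        linarith




open Classical in
lemma lem_rigid {X : Type*} [MetricSpace X] [CompactSpace X] [MeasurableSpace X]
    [BorelSpace X] (μ : Measure X) [IsProbabilityMeasure μ] (T : X ≃ₜ X)
    (hT : MeasurePreserving T μ μ)
    (hret : ∀ ε > (0 : ℝ), ∀ M : ℕ, ∃ t : ℕ, M ≤ t ∧
      ∫⁻ x, ENNReal.ofReal (dist ((⇑T)^[t] x) x) ∂μ ≤ ENNReal.ofReal ε) :
    ∃ t : ℕ → ℕ, StrictMono t ∧ ∀ f : X → ℝ, MemLp f 2 μ →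
      Tendsto (fun k => eLpNorm (fun x => f ((⇑T)^[t k] x) - f x) 2 μ)
        atTop (𝓝 0) := by
  have hTcont : ∀ n : ℕ, Continuous ((⇑T)^[n]) := fun n => T.continuous.iterate n
  have H : ∀ (k M : ℕ), ∃ t : ℕ, M ≤ t ∧
      ∫⁻ x, ENNReal.ofReal (dist ((⇑T)^[t] x) x) ∂μ ≤ ENNReal.ofReal (1 / (k + 1)) :=
    fun k M => hret (1 / (k + 1)) (by positivity) M
  choose g hg1 hg2 using H
  set t : ℕ → ℕ := fun k => Nat.rec (g 0 1) (fun k ih => g (k + 1) (ih + 1)) k with htdef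
  have htsucc : ∀ k, t (k + 1) = g (k + 1) (t k + 1) := fun k => rfl
  have htmono : StrictMono t := strictMono_nat_of_lt_succ fun k => by
    have := hg1 (k + 1) (t k + 1); rw [htsucc]; omega
  have htJ : ∀ k, ∫⁻ x, ENNReal.ofReal (dist ((⇑T)^[t k] x) x) ∂μ
      ≤ ENNReal.ofReal (1 / (k + 1)) := by
    intro k
    cases k with
    | zero => exact hg2 0 1
    | succ k => rw [htsucc]; exact hg2 (k + 1) (t k + 1)
  refine ⟨t, htmono, ?_⟩
  intro f hf
  have hμ0 : μ ≠ 0 := IsProbabilityMeasure.ne_zero μ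
  suffices hreal : ∀ r : ℝ, 0 < r →
      ∀ᶠ k in atTop, eLpNorm (fun x => f ((⇑T)^[t k] x) - f x) 2 μ ≤ ENNReal.ofReal r by
    rw [ENNReal.tendsto_nhds_zero]
    intro ε hε
    rcases eq_or_ne ε ⊤ with rfl | htop
    · exact Filter.Eventually.of_forall fun _ => le_top
    · have h := hreal ε.toReal (ENNReal.toReal_pos hε.ne' htop)
      exact h.mono fun k hk => le_trans hk (by rw [ENNReal.ofReal_toReal htop])
  intro r hr
  -- approximate f by a bounded continuous function
  obtain ⟨g, hg_close, hgmem⟩ := hf.exists_boundedContinuous_eLpNorm_sub_le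
    (by norm_num : (2 : ℝ≥0∞) ≠ ⊤)
    (show ENNReal.ofReal (r / 4) ≠ 0 by
      simp only [ne_eq, ENNReal.ofReal_eq_zero, not_le]; linarith)
  set B : ℝ := ‖g‖ with hBdef
  have hB0 : 0 ≤ B := norm_nonneg _
  have hgb : ∀ x : X, |g x| ≤ B := fun x => by
    simpa [Real.norm_eq_abs] using g.norm_coe_le_norm x
  -- uniform continuity of g
  have hUC : UniformContinuous ⇑g := CompactSpace.uniformContinuous_of_continuous g.continuous
  obtain ⟨δ, hδ0, hδ⟩ := Metric.uniformContinuous_iff.1 hUC (r / 8) (by linarith)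
  -- the bad sets
  set S : ℕ → Set X := fun k => {x | δ ≤ dist ((⇑T)^[t k] x) x} with hSdef
  have hSm : ∀ k, MeasurableSet (S k) := fun k =>
    measurableSet_le measurable_const ((hTcont (t k)).dist continuous_id).measurable
  have hμS : ∀ k, μ (S k) ≤ ENNReal.ofReal ((1 / (k + 1)) / δ) := by
    intro k
    have hFm : Measurable fun x => ENNReal.ofReal (dist ((⇑T)^[t k] x) x) :=
      ENNReal.measurable_ofReal.comp ((hTcont (t k)).dist continuous_id).measurable
    have h1 : ENNReal.ofReal δ * μ (S k)
        ≤ ∫⁻ x, ENNReal.ofReal (dist ((⇑T)^[t k] x) x) ∂μ := by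
      have h2 := mul_meas_ge_le_lintegral (μ := μ) hFm (ENNReal.ofReal δ)
      have hset : {x | ENNReal.ofReal δ ≤ ENNReal.ofReal (dist ((⇑T)^[t k] x) x)} = S k := by
        ext x
        simp [hSdef, ENNReal.ofReal_le_ofReal_iff dist_nonneg]
      rwa [hset] at h2
    have h3 : μ (S k) ≤ ENNReal.ofReal (1 / (k + 1)) / ENNReal.ofReal δ := by
      rw [ENNReal.le_div_iff_mul_le (Or.inl (by simp [hδ0])) (Or.inl ENNReal.ofReal_ne_top)]
      calc μ (S k) * ENNReal.ofReal δ = ENNReal.ofReal δ * μ (S k) := mul_comm _ _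
        _ ≤ _ := le_trans h1 (htJ k)
    rwa [← ENNReal.ofReal_div_of_pos hδ0] at h3
  -- eventually the bad-set contribution is small
  have htend : Tendsto (fun k : ℕ => (2 * B + 1) * Real.sqrt ((1 / (k + 1)) / δ))
      atTop (𝓝 0) := by
    have h1 : Tendsto (fun k : ℕ => (1 / ((k : ℝ) + 1)) / δ) atTop (𝓝 0) := by
      have := tendsto_one_div_add_atTop_nhds_zero_nat (𝕜 := ℝ)
      simpa using this.div_const δ
    have h2 : Tendsto (fun k : ℕ => Real.sqrt ((1 / ((k : ℝ) + 1)) / δ)) atTop (𝓝 0) := by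
      have := (Real.continuous_sqrt.tendsto 0).comp h1
      simpa [Function.comp_def] using this
    simpa using h2.const_mul (2 * B + 1)
  have hev : ∀ᶠ (k : ℕ) in atTop, (2 * B + 1) * Real.sqrt ((1 / (k + 1)) / δ) < r / 8 :=
    htend.eventually_lt_const (by linarith)
  filter_upwards [hev] with k hk
  -- decompose
  have hMPk : MeasurePreserving ((⇑T)^[t k]) μ μ := hT.iterate _
  have hfg_meas : AEStronglyMeasurable (fun x => f x - g x) μ :=
    hf.1.sub g.continuous.aestronglyMeasurable
  have hA_meas : AEStronglyMeasurable ((fun x => f x - g x) ∘ (⇑T)^[t k]) μ :=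
    hfg_meas.comp_quasiMeasurePreserving hMPk.quasiMeasurePreserving
  have hB_meas : AEStronglyMeasurable (fun x => g ((⇑T)^[t k] x) - g x) μ :=
    ((g.continuous.comp (hTcont (t k))).sub g.continuous).aestronglyMeasurable
  have hC_meas : AEStronglyMeasurable (fun x => g x - f x) μ :=
    g.continuous.aestronglyMeasurable.sub hf.1
  have heq : (fun x => f ((⇑T)^[t k] x) - f x)
      = ((fun x => f x - g x) ∘ (⇑T)^[t k])
        + ((fun x => g ((⇑T)^[t k] x) - g x) + fun x => g x - f x) := by
    funext x
    simp only [Pi.add_apply, Function.comp_apply]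
    ring
  have hbound_B : eLpNorm (fun x => g ((⇑T)^[t k] x) - g x) 2 μ
      ≤ ENNReal.ofReal (r / 8) + ENNReal.ofReal (r / 8) := by
    have hptw : ∀ x, ‖g ((⇑T)^[t k] x) - g x‖
        ≤ ‖(fun x => r / 8 + (S k).indicator (fun _ => 2 * B) x) x‖ := by
      intro x
      show ‖g ((⇑T)^[t k] x) - g x‖ ≤ ‖r / 8 + (S k).indicator (fun _ => 2 * B) x‖
      by_cases hx : x ∈ S k
      · have h1 : |g ((⇑T)^[t k] x) - g x| ≤ 2 * B := by
          have := hgb ((⇑T)^[t k] x); have := hgb x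
          rw [abs_sub_le_iff]; constructor <;> nlinarith [abs_le.1 (hgb ((⇑T)^[t k] x)), abs_le.1 (hgb x)]
        rw [Set.indicator_of_mem hx]
        rw [Real.norm_eq_abs, Real.norm_eq_abs]
        rw [abs_of_nonneg (show (0:ℝ) ≤ r / 8 + 2 * B by linarith)]
        linarith
      · have hdist : dist ((⇑T)^[t k] x) x < δ := not_le.1 hx
        have h1 : dist (g ((⇑T)^[t k] x)) (g x) < r / 8 := hδ hdist
        rw [Set.indicator_of_notMem hx]
        rw [Real.norm_eq_abs, Real.norm_eq_abs, add_zero, abs_of_nonneg (show (0:ℝ) ≤ r / 8 by linarith)]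
        rw [Real.dist_eq] at h1
        linarith
    calc eLpNorm (fun x => g ((⇑T)^[t k] x) - g x) 2 μ
        ≤ eLpNorm (fun x => r / 8 + (S k).indicator (fun _ => 2 * B) x) 2 μ :=
          eLpNorm_mono hptw
      _ ≤ eLpNorm (fun _ => r / 8) 2 μ
          + eLpNorm ((S k).indicator (fun _ => 2 * B)) 2 μ :=
          eLpNorm_add_le aestronglyMeasurable_const
            ((stronglyMeasurable_const.indicator (hSm k)).aestronglyMeasurable) one_le_two
      _ ≤ ENNReal.ofReal (r / 8) + ENNReal.ofReal (r / 8) := by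
          refine add_le_add ?_ ?_
          · rw [eLpNorm_const _ (by norm_num) hμ0]
            simp only [measure_univ, ENNReal.one_rpow, mul_one]
            rw [Real.enorm_eq_ofReal (by linarith)]
          · rw [eLpNorm_indicator_const (hSm k) (by norm_num) (by norm_num)]
            have he1 : ‖(2 * B : ℝ)‖ₑ = ENNReal.ofReal (2 * B) :=
              Real.enorm_eq_ofReal (by linarith)
            have hp2 : (1 : ℝ) / (2 : ℝ≥0∞).toReal = (1 / 2 : ℝ) := by norm_num
            rw [he1, hp2]
            calc ENNReal.ofReal (2 * B) * μ (S k) ^ ((1 : ℝ) / 2)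
                ≤ ENNReal.ofReal (2 * B + 1)
                  * ENNReal.ofReal ((1 / (k + 1)) / δ) ^ ((1 : ℝ) / 2) := by
                  exact mul_le_mul' (ENNReal.ofReal_le_ofReal (by linarith))
                    (ENNReal.rpow_le_rpow (hμS k) (by norm_num))
              _ = ENNReal.ofReal ((2 * B + 1) * ((1 / (k + 1)) / δ) ^ ((1 : ℝ) / 2)) := by
                  rw [ENNReal.ofReal_rpow_of_nonneg (div_nonneg (by positivity) hδ0.le) (by norm_num),
                    ← ENNReal.ofReal_mul (by linarith)]
              _ ≤ ENNReal.ofReal (r / 8) := by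
                  refine ENNReal.ofReal_le_ofReal ?_
                  have hsq : ((1 / ((k : ℝ) + 1)) / δ) ^ ((1 : ℝ) / 2)
                      = Real.sqrt ((1 / ((k : ℝ) + 1)) / δ) := by
                    rw [Real.sqrt_eq_rpow]
                  rw [hsq]
                  exact hk.le
  rw [heq]
  calc eLpNorm (((fun x => f x - g x) ∘ (⇑T)^[t k])
        + ((fun x => g ((⇑T)^[t k] x) - g x) + fun x => g x - f x)) 2 μ
      ≤ eLpNorm ((fun x => f x - g x) ∘ (⇑T)^[t k]) 2 μ
        + eLpNorm ((fun x => g ((⇑T)^[t k] x) - g x) + fun x => g x - f x) 2 μ :=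
        eLpNorm_add_le hA_meas (hB_meas.add hC_meas) one_le_two
    _ ≤ eLpNorm ((fun x => f x - g x) ∘ (⇑T)^[t k]) 2 μ
        + (eLpNorm (fun x => g ((⇑T)^[t k] x) - g x) 2 μ
          + eLpNorm (fun x => g x - f x) 2 μ) :=
        add_le_add le_rfl (eLpNorm_add_le hB_meas hC_meas one_le_two)
    _ ≤ ENNReal.ofReal (r / 4)
        + ((ENNReal.ofReal (r / 8) + ENNReal.ofReal (r / 8)) + ENNReal.ofReal (r / 4)) := by
        refine add_le_add ?_ (add_le_add hbound_B ?_)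
        · rw [eLpNorm_comp_measurePreserving hfg_meas hMPk]
          simpa [Pi.sub_def] using hg_close
        · have : (fun x => g x - f x) = -(fun x => f x - g x) := by funext x; simp
          rw [this, eLpNorm_neg]
          simpa [Pi.sub_def] using hg_close
    _ ≤ ENNReal.ofReal r := by
        rw [← ENNReal.ofReal_add (by linarith) (by linarith),
          ← ENNReal.ofReal_add (by linarith) (by linarith),
          ← ENNReal.ofReal_add (by linarith) (by linarith)]
        exact ENNReal.ofReal_le_ofReal (by linarith)

open Classical in
theorem stmt16 {X : Type*} [MetricSpace X] [CompactSpace X] [MeasurableSpace X]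
    [BorelSpace X] (μ : Measure X) [IsProbabilityMeasure μ] (T : X ≃ₜ X)
    (hT : MeasurePreserving T μ μ)
    (a : ℕ → ℕ) (ha : StrictMono a)
    (hdens : (0 : ℝ) < limsup (fun n : ℕ =>
      (((Finset.range n).filter (fun m => m ∈ Set.range a)).card : ℝ) / n) atTop)
    (hmec : ∀ τ > (0 : ℝ), ∃ K : Set X, IsCompact K ∧
      μ K > ENNReal.ofReal (1 - τ) ∧ ∀ ε > (0 : ℝ), ∃ δ > (0 : ℝ),
      ∀ x ∈ K, ∀ y ∈ K, dist x y < δ →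
        limsup (fun n : ℕ => (1 / (n : ℝ)) *
          ∑ i ∈ Finset.range n, dist ((⇑T)^[a i] x) ((⇑T)^[a i] y)) atTop < ε) :
    ∃ t : ℕ → ℕ, StrictMono t ∧ ∀ f : X → ℝ, MemLp f 2 μ →
      Tendsto (fun k => eLpNorm (fun x => f ((⇑T)^[t k] x) - f x) 2 μ)
        atTop (𝓝 0) := by
  exact lem_rigid μ T hT (lem_return μ T hT a ha hmec)
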